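/- With Ω_ε = {z ∈ ℝ^{2d} : |z| ≤ 1−ε or 1 ≤ |z| ≤ 1+δ(ε)} where δ(ε) is chosen so |Ω_ε| = |B₁|, there exists C > 0 such that ‖L_{B₁}‖²_{HS} − ‖L_{Ω_ε}‖²_{HS} ≤ C ε² for all small ε > 0; consequently, since α[Ω_ε] ≥ c_d ε, the exponent 2 of the Fraenkel asymmetry in the quantitative estimate ‖L_Ω‖²_{HS} ≤ ‖L_{Ω*}‖²_{HS} − c₁β(|Ω|)α[Ω]^κ cannot hold with any κ < 2. -/

import Mathlib

open MeasureTheory Metric Real Pointwise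

lemma gauss_lip : LipschitzWith 2 (fun s : ℝ => Real.exp (-Real.pi * s ^ 2)) := by
  have hder : ∀ s : ℝ, HasDerivAt (fun s : ℝ => Real.exp (-Real.pi * s ^ 2))
      (Real.exp (-Real.pi * s ^ 2) * (-Real.pi * (2 * s))) s := by
    intro s
    have h1 : HasDerivAt (fun s : ℝ => -Real.pi * s ^ 2) (-Real.pi * (2 * s)) s := by
      simpa using ((hasDerivAt_pow 2 s).const_mul (-Real.pi))
    exact h1.exp
  apply lipschitzWith_of_nnnorm_deriv_le
  · intro s; exact (hder s).differentiableAt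
  · intro s
    rw [(hder s).deriv, ← NNReal.coe_le_coe]
    push_cast
    rw [Real.norm_eq_abs, abs_mul]
    have h2 : Real.exp (-Real.pi * s ^ 2) * (1 + Real.pi * s ^ 2) ≤ 1 := by
      have h3 : 1 + Real.pi * s ^ 2 ≤ Real.exp (Real.pi * s ^ 2) := by
        have := Real.add_one_le_exp (Real.pi * s ^ 2); linarith
      calc Real.exp (-Real.pi * s ^ 2) * (1 + Real.pi * s ^ 2)
          ≤ Real.exp (-Real.pi * s ^ 2) * Real.exp (Real.pi * s ^ 2) :=
            mul_le_mul_of_nonneg_left h3 (Real.exp_pos _).le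
        _ = 1 := by rw [← Real.exp_add]; simp
    have hpos : (0:ℝ) < 1 + Real.pi * s ^ 2 := by positivity
    have habs : |(-Real.pi * (2 * s))| ≤ 2 * Real.pi * |s| := by
      rw [abs_mul, abs_neg, abs_of_nonneg Real.pi_pos.le, abs_mul, abs_two]
      apply le_of_eq; ring
    have key : Real.exp (-Real.pi * s ^ 2) * (2 * Real.pi * |s|) ≤ 2 := by
      have h4 : 2 * Real.pi * |s| ≤ 2 * (1 + Real.pi * s ^ 2) := by
        nlinarith [sq_nonneg (2 * |s| - 1), Real.pi_le_four, Real.pi_pos, sq_abs s]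
      calc Real.exp (-Real.pi * s ^ 2) * (2 * Real.pi * |s|)
          ≤ Real.exp (-Real.pi * s ^ 2) * (2 * (1 + Real.pi * s ^ 2)) :=
            mul_le_mul_of_nonneg_left h4 (Real.exp_pos _).le
        _ = 2 * (Real.exp (-Real.pi * s ^ 2) * (1 + Real.pi * s ^ 2)) := by ring
        _ ≤ 2 * 1 := by linarith
        _ = 2 := by norm_num
    calc |Real.exp (-Real.pi * s ^ 2)| * |(-Real.pi * (2 * s))|
        = Real.exp (-Real.pi * s ^ 2) * |(-Real.pi * (2 * s))| := by
          rw [abs_of_pos (Real.exp_pos _)]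
      _ ≤ Real.exp (-Real.pi * s ^ 2) * (2 * Real.pi * |s|) :=
          mul_le_mul_of_nonneg_left habs (Real.exp_pos _).le
      _ ≤ 2 := key

section aux
variable {n : ℕ}
local notation "E" => EuclideanSpace ℝ (Fin n)

lemma ker_le_one (z x : E) : Real.exp (-Real.pi * dist z x ^ 2) ≤ 1 := by
  rw [Real.exp_le_one_iff]
  nlinarith [sq_nonneg (dist z x), Real.pi_pos]

lemma ker_lip (z w x : E) :
    |Real.exp (-Real.pi * dist z x ^ 2) - Real.exp (-Real.pi * dist w x ^ 2)| ≤ 2 * dist z w := by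
  have h := gauss_lip.dist_le_mul (dist z x) (dist w x)
  rw [Real.dist_eq, Real.dist_eq] at h
  simp only [NNReal.coe_ofNat] at h
  exact h.trans (by
    have h2 := abs_dist_sub_le z w x
    nlinarith [dist_nonneg (x := z) (y := w)])

lemma ker_int {S : Set E} (hS : volume S ≠ ⊤) (z : E) :
    IntegrableOn (fun x : E => Real.exp (-Real.pi * dist z x ^ 2)) S := by
  apply Measure.integrableOn_of_bounded hS (Continuous.aestronglyMeasurable (by fun_prop)) (M := 1)
  filter_upwards with x
  rw [Real.norm_eq_abs, abs_of_pos (Real.exp_pos _)]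
  exact ker_le_one z x

lemma inner_nonneg {S : Set E} (z : E) :
    0 ≤ ∫ x in S, Real.exp (-Real.pi * dist z x ^ 2) :=
  integral_nonneg (fun _ => (Real.exp_pos _).le)

lemma inner_le {S : Set E} (hSm : MeasurableSet S) (hS : volume S ≠ ⊤) (z : E) :
    ∫ x in S, Real.exp (-Real.pi * dist z x ^ 2) ≤ (volume S).toReal := by
  calc ∫ x in S, Real.exp (-Real.pi * dist z x ^ 2)
      ≤ ∫ _x in S, (1:ℝ) :=
        setIntegral_mono_on (ker_int hS z) (integrableOn_const hS) hSm
          (fun x _ => ker_le_one z x)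
    _ = (volume S).toReal := by simp [Measure.real]

lemma inner_lip {S : Set E} (hSm : MeasurableSet S) (hS : volume S ≠ ⊤) (z w : E) :
    |(∫ x in S, Real.exp (-Real.pi * dist z x ^ 2))
      - ∫ x in S, Real.exp (-Real.pi * dist w x ^ 2)|
      ≤ 2 * (volume S).toReal * dist z w := by
  rw [← integral_sub (ker_int hS z) (ker_int hS w)]
  calc |∫ x in S, (Real.exp (-Real.pi * dist z x ^ 2) - Real.exp (-Real.pi * dist w x ^ 2))|
      ≤ ∫ x in S, |Real.exp (-Real.pi * dist z x ^ 2) - Real.exp (-Real.pi * dist w x ^ 2)| := by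
        simp only [← Real.norm_eq_abs]
        exact norm_integral_le_integral_norm _
    _ ≤ ∫ _x in S, 2 * dist z w := by
        apply setIntegral_mono_on _ _ hSm (fun x _ => ker_lip z w x)
        · exact ((ker_int hS z).sub (ker_int hS w)).abs
        · exact integrableOn_const hS
    _ = (volume S).toReal * (2 * dist z w) := by simp [Measure.real]
    _ = 2 * (volume S).toReal * dist z w := by ring

lemma exists_isom (z w : E) (h : ‖z‖ = ‖w‖) :
    ∃ R : (EuclideanSpace ℝ (Fin n)) ≃ₗᵢ[ℝ] (EuclideanSpace ℝ (Fin n)), R z = w :=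
  ⟨Submodule.reflection (Submodule.span ℝ {z - w})ᗮ, Submodule.reflection_sub h⟩

lemma psi_radial (r : ℝ) (z w : E) (h : ‖z‖ = ‖w‖) :
    ∫ x in closedBall (0:E) r, Real.exp (-Real.pi * dist z x ^ 2)
      = ∫ x in closedBall (0:E) r, Real.exp (-Real.pi * dist w x ^ 2) := by
  obtain ⟨R, hR⟩ := exists_isom z w h
  have hpre : R ⁻¹' closedBall (0:E) r = closedBall (0:E) r := by
    ext x
    simp [mem_closedBall, dist_zero_right, R.norm_map]
  have hkey := R.measurePreserving.setIntegral_preimage_emb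
    (R.toHomeomorph.measurableEmbedding)
    (fun y => Real.exp (-Real.pi * dist w y ^ 2)) (closedBall (0:E) r)
  rw [hpre] at hkey
  rw [← hkey]
  apply setIntegral_congr_fun (measurableSet_closedBall)
  intro x _
  simp only
  rw [← hR, R.dist_map]

lemma prod_int {S T : Set E} (hS : volume S ≠ ⊤) (hT : volume T ≠ ⊤) :
    Integrable (Function.uncurry (fun z w : E => Real.exp (-Real.pi * dist z w ^ 2)))
      ((volume.restrict S).prod (volume.restrict T)) := by
  haveI : IsFiniteMeasure (volume.restrict S) :=
    ⟨by rwa [Measure.restrict_apply_univ, lt_top_iff_ne_top]⟩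
  haveI : IsFiniteMeasure (volume.restrict T) :=
    ⟨by rwa [Measure.restrict_apply_univ, lt_top_iff_ne_top]⟩
  apply Integrable.mono' (g := fun _ => (1:ℝ)) (integrable_const 1)
  · exact Continuous.aestronglyMeasurable (by fun_prop)
  · filter_upwards with p
    simp only [Function.uncurry]
    rw [Real.norm_eq_abs, abs_of_pos (Real.exp_pos _)]
    exact ker_le_one _ _

lemma I_swap {S T : Set E} (hS : volume S ≠ ⊤) (hT : volume T ≠ ⊤) :
    (∫ z in S, ∫ w in T, Real.exp (-Real.pi * dist z w ^ 2))
      = ∫ w in T, ∫ z in S, Real.exp (-Real.pi * dist w z ^ 2) := by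
  rw [integral_integral_swap (prod_int hS hT)]
  congr 1; ext w; congr 1; ext z; rw [dist_comm]

lemma outer_cont {T : Set E} (hTm : MeasurableSet T) (hT : volume T ≠ ⊤) :
    Continuous (fun z : E => ∫ w in T, Real.exp (-Real.pi * dist z w ^ 2)) := by
  apply LipschitzWith.continuous (K := (2 * (volume T).toReal).toNNReal)
  apply LipschitzWith.of_dist_le_mul
  intro z w
  rw [Real.dist_eq]
  calc |(∫ x in T, Real.exp (-Real.pi * dist z x ^ 2))
      - ∫ x in T, Real.exp (-Real.pi * dist w x ^ 2)|
      ≤ 2 * (volume T).toReal * dist z w := inner_lip hTm hT z w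
    _ ≤ ((2 * (volume T).toReal).toNNReal : ℝ) * dist z w := by
        apply mul_le_mul_of_nonneg_right _ dist_nonneg
        rw [Real.coe_toNNReal _ (by positivity)]

lemma outer_int {S T : Set E} (hS : volume S ≠ ⊤) (hTm : MeasurableSet T)
    (hT : volume T ≠ ⊤) :
    IntegrableOn (fun z : E => ∫ w in T, Real.exp (-Real.pi * dist z w ^ 2)) S := by
  apply Measure.integrableOn_of_bounded hS
    (Continuous.aestronglyMeasurable (outer_cont hTm hT)) (M := (volume T).toReal)
  filter_upwards with z
  rw [Real.norm_eq_abs, abs_of_nonneg (inner_nonneg z)]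
  exact inner_le hTm hT z

lemma inner_union {T T' : Set E} (hd : Disjoint T T') (hT'm : MeasurableSet T')
    (hT : volume T ≠ ⊤) (hT' : volume T' ≠ ⊤) (z : E) :
    (∫ w in T ∪ T', Real.exp (-Real.pi * dist z w ^ 2))
      = (∫ w in T, Real.exp (-Real.pi * dist z w ^ 2))
        + ∫ w in T', Real.exp (-Real.pi * dist z w ^ 2) :=
  setIntegral_union hd hT'm (ker_int hT z) (ker_int hT' z)


lemma vol_facts (hn : 0 < n) (ε δ' : ℝ) (hε : 0 < ε) (hε2 : ε < 1/2) (hδ0 : 0 < δ')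
    (hvol : volume (closedBall (0:E) (1-ε) ∪ (closedBall (0:E) (1+δ') \ ball (0:E) 1))
      = volume (ball (0:E) 1)) :
    (volume (ball (0:E) 1 \ closedBall (0:E) (1-ε))).toReal
        = (volume (closedBall (0:E) (1+δ') \ ball (0:E) 1)).toReal
      ∧ (volume (ball (0:E) 1 \ closedBall (0:E) (1-ε))).toReal
          ≤ n * ε * (volume (ball (0:E) 1)).toReal
      ∧ δ' ≤ ε := by
  haveI : Nonempty (Fin n) := ⟨⟨0, hn⟩⟩
  set D := closedBall (0:E) (1-ε) with hD
  set G := ball (0:E) 1 \ D with hG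
  set A := closedBall (0:E) (1+δ') \ ball (0:E) 1 with hA
  set VE := volume (ball (0:E) 1) with hVE
  have hVEtop : VE ≠ ⊤ := measure_ball_lt_top.ne
  have hVEpos : 0 < VE := measure_ball_pos _ _ one_pos
  set V := VE.toReal with hV
  have hVpos : 0 < V := ENNReal.toReal_pos hVEpos.ne' hVEtop
  have hDsub : D ⊆ ball (0:E) 1 := closedBall_subset_ball (by linarith)
  have hDfin : volume D ≠ ⊤ := measure_closedBall_lt_top.ne
  have hvolD : volume D = ENNReal.ofReal ((1-ε)^n) * VE := by
    rw [hD, Measure.addHaar_closedBall volume 0 (by linarith : (0:ℝ) ≤ 1-ε)]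
    rw [finrank_euclideanSpace_fin]
  have hvolG : volume G = VE - volume D := by
    rw [hG, measure_diff hDsub measurableSet_closedBall.nullMeasurableSet hDfin]
  have hBsub : ball (0:E) 1 ⊆ closedBall (0:E) (1+δ') :=
    ball_subset_closedBall.trans (closedBall_subset_closedBall (by linarith))
  have hvolA : volume A = ENNReal.ofReal ((1+δ')^n) * VE - VE := by
    rw [hA, measure_diff hBsub measurableSet_ball.nullMeasurableSet hVEtop]
    rw [Measure.addHaar_closedBall volume 0 (by linarith : (0:ℝ) ≤ 1+δ'),
      finrank_euclideanSpace_fin]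
  -- volume A = volume G
  have hDA : Disjoint D A := by
    rw [Set.disjoint_left]
    intro z hzD hzA
    exact hzA.2 (hDsub hzD)
  have hDG : Disjoint D G := disjoint_sdiff_self_right
  have hunionG : D ∪ G = ball (0:E) 1 := Set.union_diff_cancel hDsub
  have hAm : MeasurableSet A := measurableSet_closedBall.diff measurableSet_ball
  have hGm : MeasurableSet G := measurableSet_ball.diff measurableSet_closedBall
  have h1 : volume D + volume A = volume D + volume G := by
    rw [← measure_union hDA hAm, ← measure_union hDG hGm, hunionG, hvol]
  have hAG : volume A = volume G := by
    have := (ENNReal.add_right_inj hDfin).mp h1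
    exact this
  -- bounds
  have hGfin : volume G ≠ ⊤ := (measure_mono Set.diff_subset |>.trans_lt measure_ball_lt_top).ne
  have hone : (1:ℝ) - ↑n * ε ≤ (1-ε)^n := by
    have := one_add_mul_le_pow (by linarith : (-2:ℝ) ≤ -ε) n
    calc (1:ℝ) - ↑n * ε = 1 + ↑n * (-ε) := by ring
      _ ≤ (1 + -ε)^n := this
      _ = (1-ε)^n := by ring_nf
  have hone2 : (1:ℝ) + ↑n * δ' ≤ (1+δ')^n := one_add_mul_le_pow (by linarith : (-2:ℝ) ≤ δ') n
  have hpow_nonneg : (0:ℝ) ≤ (1-ε)^n := pow_nonneg (by linarith) n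
  have hpow_le : ((1:ℝ)-ε)^n ≤ 1 := pow_le_one₀ (by linarith) (by linarith)
  have hle1 : ENNReal.ofReal ((1-ε)^n) * VE ≤ VE := by
    calc ENNReal.ofReal ((1-ε)^n) * VE ≤ 1 * VE :=
        mul_le_mul_left (by simpa using ENNReal.ofReal_le_one.mpr hpow_le) VE
      _ = VE := one_mul _
  have hmG : (volume G).toReal = V - (1-ε)^n * V := by
    rw [hvolG, hvolD, ENNReal.toReal_sub_of_le hle1 hVEtop, ENNReal.toReal_mul,
      ENNReal.toReal_ofReal hpow_nonneg, hV]
  have hmGle : (volume G).toReal ≤ n * ε * V := by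
    rw [hmG]
    have h5 : (1 - ↑n * ε) * V ≤ (1-ε)^n * V := mul_le_mul_of_nonneg_right hone hVpos.le
    nlinarith
  have hge1 : (1:ℝ) ≤ (1+δ')^n := one_le_pow₀ (by linarith)
  have hle2 : VE ≤ ENNReal.ofReal ((1+δ')^n) * VE := by
    calc VE = 1 * VE := (one_mul _).symm
      _ ≤ ENNReal.ofReal ((1+δ')^n) * VE := by
          apply mul_le_mul_left
          simp only [← ENNReal.ofReal_one]
          exact ENNReal.ofReal_le_ofReal hge1
  have hmA : (volume A).toReal = (1+δ')^n * V - V := by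
    rw [hvolA, ENNReal.toReal_sub_of_le hle2 (ENNReal.mul_ne_top ENNReal.ofReal_ne_top hVEtop),
      ENNReal.toReal_mul, ENNReal.toReal_ofReal (pow_nonneg (by linarith) n), hV]
  have hAGr : (volume A).toReal = (volume G).toReal := by rw [hAG]
  have hdelta : δ' ≤ ε := by
    have h2 : ↑n * δ' * V ≤ ((1+δ')^n - 1) * V := by
      apply mul_le_mul_of_nonneg_right _ hVpos.le
      linarith
    have h3 : ((1+δ')^n - 1) * V = (volume A).toReal := by rw [hmA]; ring
    have h4 : (volume A).toReal ≤ ↑n * ε * V := by rw [hAGr]; exact hmGle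
    have hn' : (0:ℝ) < n := by exact_mod_cast hn
    have h6 : ↑n * δ' ≤ ↑n * ε := (mul_le_mul_iff_left₀ hVpos).mp (by linarith)
    exact (mul_le_mul_iff_right₀ hn').mp h6
  exact ⟨hAGr.symm, hmGle, hdelta⟩


lemma quad_expand {X Y : Set E} (hd : Disjoint X Y) (hXm : MeasurableSet X)
    (hYm : MeasurableSet Y) (hX : volume X ≠ ⊤) (hY : volume Y ≠ ⊤) :
    (∫ z in X ∪ Y, ∫ w in X ∪ Y, Real.exp (-Real.pi * dist z w ^ 2))
      = (∫ z in X, ∫ w in X, Real.exp (-Real.pi * dist z w ^ 2))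
        + (∫ z in X, ∫ w in Y, Real.exp (-Real.pi * dist z w ^ 2))
        + (∫ z in Y, ∫ w in X, Real.exp (-Real.pi * dist z w ^ 2))
        + (∫ z in Y, ∫ w in Y, Real.exp (-Real.pi * dist z w ^ 2)) := by
  have hXY : volume (X ∪ Y) ≠ ⊤ := by
    refine ((measure_union_le X Y).trans_lt ?_).ne
    exact ENNReal.add_lt_top.mpr ⟨hX.lt_top, hY.lt_top⟩
  rw [setIntegral_union hd hYm (outer_int hX (hXm.union hYm) hXY)
    (outer_int hY (hXm.union hYm) hXY)]
  have hsplit : ∀ S : Set E, MeasurableSet S → volume S ≠ ⊤ →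
      (∫ z in S, ∫ w in X ∪ Y, Real.exp (-Real.pi * dist z w ^ 2))
        = (∫ z in S, ∫ w in X, Real.exp (-Real.pi * dist z w ^ 2))
          + ∫ z in S, ∫ w in Y, Real.exp (-Real.pi * dist z w ^ 2) := by
    intro S hSm hS
    rw [← integral_add (outer_int hS hXm hX) (outer_int hS hYm hY)]
    apply setIntegral_congr_fun hSm
    intro z _
    exact inner_union hd hYm hX hY z
  rw [hsplit X hXm hX, hsplit Y hYm hY]
  ring

set_option maxHeartbeats 1600000 in
lemma part1_core (hn : 0 < n) (ε δ' : ℝ) (hε : 0 < ε) (hε2 : ε < 1/2) (hδ0 : 0 < δ')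
    (hvol : volume (closedBall (0:E) (1-ε) ∪ (closedBall (0:E) (1+δ') \ ball (0:E) 1))
      = volume (ball (0:E) 1)) :
    (∫ z in ball (0:E) 1, ∫ w in ball (0:E) 1, Real.exp (-Real.pi * dist z w ^ 2))
      - (∫ z in (closedBall (0:E) (1-ε) ∪ (closedBall (0:E) (1+δ') \ ball (0:E) 1)),
          ∫ w in (closedBall (0:E) (1-ε) ∪ (closedBall (0:E) (1+δ') \ ball (0:E) 1)),
            Real.exp (-Real.pi * dist z w ^ 2))
      ≤ (8 * n * (volume (ball (0:E) 1)).toReal ^ 2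
          + n ^ 2 * (volume (ball (0:E) 1)).toReal ^ 2) * ε ^ 2 := by
  obtain ⟨hAGr, hmGle, hdelta⟩ := vol_facts hn ε δ' hε hε2 hδ0 hvol
  set D := closedBall (0:E) (1-ε) with hD
  set G := ball (0:E) 1 \ D with hG
  set A := closedBall (0:E) (1+δ') \ ball (0:E) 1 with hA
  set V := (volume (ball (0:E) 1)).toReal with hV
  have hVEtop : volume (ball (0:E) 1) ≠ ⊤ := measure_ball_lt_top.ne
  have hDsub : D ⊆ ball (0:E) 1 := closedBall_subset_ball (by linarith)
  have hDm : MeasurableSet D := measurableSet_closedBall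
  have hGm : MeasurableSet G := measurableSet_ball.diff measurableSet_closedBall
  have hAm : MeasurableSet A := measurableSet_closedBall.diff measurableSet_ball
  have hDfin : volume D ≠ ⊤ := measure_closedBall_lt_top.ne
  have hGfin : volume G ≠ ⊤ := ((measure_mono Set.diff_subset).trans_lt measure_ball_lt_top).ne
  have hAfin : volume A ≠ ⊤ := ((measure_mono Set.diff_subset).trans_lt measure_closedBall_lt_top).ne
  have hDG : Disjoint D G := disjoint_sdiff_self_right
  have hDA : Disjoint D A := by
    rw [Set.disjoint_left]
    intro z hzD hzA
    exact hzA.2 (hDsub hzD)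
  have hunionG : D ∪ G = ball (0:E) 1 := Set.union_diff_cancel hDsub
  set mD := (volume D).toReal with hmD
  set mG := (volume G).toReal with hmG
  set mA := (volume A).toReal with hmA
  have hmDnn : 0 ≤ mD := ENNReal.toReal_nonneg
  have hmGnn : 0 ≤ mG := ENNReal.toReal_nonneg
  have hmDle : mD ≤ V := (ENNReal.toReal_le_toReal hDfin hVEtop).mpr
    (measure_mono (hDsub.trans (by rfl)))
  -- the distinguished point on the unit sphere
  set w₀ : EuclideanSpace ℝ (Fin n) := EuclideanSpace.single (⟨0, hn⟩ : Fin n) (1:ℝ) with hw₀def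
  have hw₀ : ‖w₀‖ = 1 := by rw [hw₀def, EuclideanSpace.norm_single]; norm_num
  set ψ₀ : ℝ := ∫ x in D, Real.exp (-Real.pi * dist w₀ x ^ 2) with hψ₀
  have hkey : ∀ z : EuclideanSpace ℝ (Fin n), 1 - ε ≤ ‖z‖ → ‖z‖ ≤ 1 + δ' →
      |(∫ x in D, Real.exp (-Real.pi * dist z x ^ 2)) - ψ₀| ≤ 2 * mD * ε := by
    intro z h1 h2
    have hz' : ‖z‖ = ‖(‖z‖ • w₀ : EuclideanSpace ℝ (Fin n))‖ := by
      rw [norm_smul, hw₀, Real.norm_eq_abs, abs_of_nonneg (norm_nonneg z), mul_one]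
    have hrad : (∫ x in D, Real.exp (-Real.pi * dist z x ^ 2))
        = ∫ x in D, Real.exp (-Real.pi * dist (‖z‖ • w₀ : EuclideanSpace ℝ (Fin n)) x ^ 2) :=
      psi_radial (1-ε) z (‖z‖ • w₀) hz'
    rw [hrad, hψ₀]
    have hdist : dist (‖z‖ • w₀ : EuclideanSpace ℝ (Fin n)) w₀ = |‖z‖ - 1| := by
      rw [dist_eq_norm]
      have hsub : (‖z‖ • w₀ : EuclideanSpace ℝ (Fin n)) - w₀ = (‖z‖ - 1) • w₀ := by
        rw [sub_smul, one_smul]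
      rw [hsub, norm_smul, hw₀, mul_one, Real.norm_eq_abs]
    calc |(∫ x in D, Real.exp (-Real.pi * dist (‖z‖ • w₀ : EuclideanSpace ℝ (Fin n)) x ^ 2))
        - ∫ x in D, Real.exp (-Real.pi * dist w₀ x ^ 2)|
        ≤ 2 * mD * dist (‖z‖ • w₀ : EuclideanSpace ℝ (Fin n)) w₀ :=
          inner_lip hDm hDfin _ w₀
      _ ≤ 2 * mD * ε := by
          apply mul_le_mul_of_nonneg_left _ (by linarith)
          rw [hdist]
          rw [abs_le]
          constructor <;> [linarith; linarith]
  -- pointwise bounds on G and A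
  have hGup : ∀ z ∈ G, (∫ x in D, Real.exp (-Real.pi * dist z x ^ 2)) ≤ ψ₀ + 2 * mD * ε := by
    intro z hz
    have h1 : ‖z‖ < 1 := by
      have := hz.1; rwa [mem_ball_zero_iff] at this
    have h2 : ¬ (‖z‖ ≤ 1 - ε) := by
      intro hc; exact hz.2 (mem_closedBall_zero_iff.mpr hc)
    have := hkey z (by linarith) (by linarith)
    have := abs_le.mp this
    linarith [this.2]
  have hAdown : ∀ z ∈ A, ψ₀ - 2 * mD * ε ≤ ∫ x in D, Real.exp (-Real.pi * dist z x ^ 2) := by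
    intro z hz
    have h1 : ‖z‖ ≤ 1 + δ' := by
      have := hz.1; rwa [mem_closedBall_zero_iff] at this
    have h2 : ¬ (‖z‖ < 1) := by
      intro hc; exact hz.2 (mem_ball_zero_iff.mpr hc)
    have := hkey z (by linarith) h1
    have := abs_le.mp this
    linarith [this.1]
  -- integral bounds
  have hIGD : (∫ z in G, ∫ x in D, Real.exp (-Real.pi * dist z x ^ 2))
      ≤ mG * ψ₀ + mG * (2 * mD * ε) := by
    calc (∫ z in G, ∫ x in D, Real.exp (-Real.pi * dist z x ^ 2))
        ≤ ∫ _z in G, (ψ₀ + 2 * mD * ε) :=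
          setIntegral_mono_on (outer_int hGfin hDm hDfin)
            (integrableOn_const hGfin) hGm hGup
      _ = mG * (ψ₀ + 2 * mD * ε) := by rw [setIntegral_const, smul_eq_mul]; rfl
      _ = mG * ψ₀ + mG * (2 * mD * ε) := by ring
  have hIAD : mA * ψ₀ - mA * (2 * mD * ε)
      ≤ ∫ z in A, ∫ x in D, Real.exp (-Real.pi * dist z x ^ 2) := by
    calc mA * ψ₀ - mA * (2 * mD * ε) = mA * (ψ₀ - 2 * mD * ε) := by ring
      _ = ∫ _z in A, (ψ₀ - 2 * mD * ε) := by rw [setIntegral_const, smul_eq_mul]; rfl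
      _ ≤ ∫ z in A, ∫ x in D, Real.exp (-Real.pi * dist z x ^ 2) :=
          setIntegral_mono_on (integrableOn_const hAfin)
            (outer_int hAfin hDm hDfin) hAm hAdown
  have hIGG : (∫ z in G, ∫ w in G, Real.exp (-Real.pi * dist z w ^ 2)) ≤ mG * mG := by
    calc (∫ z in G, ∫ w in G, Real.exp (-Real.pi * dist z w ^ 2))
        ≤ ∫ _z in G, mG :=
          setIntegral_mono_on (outer_int hGfin hGm hGfin)
            (integrableOn_const hGfin) hGm
            (fun z _ => inner_le hGm hGfin z)
      _ = mG * mG := by rw [setIntegral_const, smul_eq_mul]; rfl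
  have hIAA : 0 ≤ ∫ z in A, ∫ w in A, Real.exp (-Real.pi * dist z w ^ 2) :=
    integral_nonneg (fun z => inner_nonneg z)
  -- swaps
  have hswapG : (∫ z in D, ∫ w in G, Real.exp (-Real.pi * dist z w ^ 2))
      = ∫ w in G, ∫ x in D, Real.exp (-Real.pi * dist w x ^ 2) := I_swap hDfin hGfin
  have hswapA : (∫ z in D, ∫ w in A, Real.exp (-Real.pi * dist z w ^ 2))
      = ∫ w in A, ∫ x in D, Real.exp (-Real.pi * dist w x ^ 2) := I_swap hDfin hAfin
  -- expansions
  have hexpB : (∫ z in ball (0:E) 1, ∫ w in ball (0:E) 1, Real.exp (-Real.pi * dist z w ^ 2))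
      = (∫ z in D, ∫ w in D, Real.exp (-Real.pi * dist z w ^ 2))
        + (∫ z in D, ∫ w in G, Real.exp (-Real.pi * dist z w ^ 2))
        + (∫ z in G, ∫ w in D, Real.exp (-Real.pi * dist z w ^ 2))
        + (∫ z in G, ∫ w in G, Real.exp (-Real.pi * dist z w ^ 2)) := by
    rw [← hunionG]
    exact quad_expand hDG hDm hGm hDfin hGfin
  have hexpO : (∫ z in D ∪ A, ∫ w in D ∪ A, Real.exp (-Real.pi * dist z w ^ 2))
      = (∫ z in D, ∫ w in D, Real.exp (-Real.pi * dist z w ^ 2))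
        + (∫ z in D, ∫ w in A, Real.exp (-Real.pi * dist z w ^ 2))
        + (∫ z in A, ∫ w in D, Real.exp (-Real.pi * dist z w ^ 2))
        + (∫ z in A, ∫ w in A, Real.exp (-Real.pi * dist z w ^ 2)) :=
    quad_expand hDA hDm hAm hDfin hAfin
  rw [hexpB, hexpO, hswapG, hswapA]
  have hmAeq : mA = mG := hAGr.symm
  have q1 : mG * mD ≤ (↑n * ε * V) * V :=
    mul_le_mul hmGle hmDle hmDnn (by positivity)
  have q2 : mG * mG ≤ (↑n * ε * V) * (↑n * ε * V) :=
    mul_le_mul hmGle hmGle hmGnn (by positivity)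
  have q3 : 8 * ε * (mG * mD) ≤ 8 * ε * ((↑n * ε * V) * V) :=
    mul_le_mul_of_nonneg_left q1 (by positivity)
  have hIGD2 := hIGD
  have hIAD2 := hIAD
  rw [hmAeq] at hIAD2
  linarith [hIGD2, hIAD2, hIGG, hIAA, q2, q3]


lemma cone_meas (e : E) : MeasurableSet {z : E | 3/4 * ‖z‖ ≤ (inner ℝ z e : ℝ)} := by
  apply measurableSet_le
  · exact (continuous_const.mul continuous_norm).measurable
  · exact (Continuous.inner continuous_id continuous_const).measurable

lemma cone_rot (hn : 0 < n) (e : E) (he : ‖e‖ = 1) :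
    volume (ball (0:E) 1 ∩ {z : E | 3/4 * ‖z‖ ≤ (inner ℝ z e : ℝ)})
      = volume (ball (0:E) 1 ∩ {z : E | 3/4 * ‖z‖
          ≤ (inner ℝ z (EuclideanSpace.single (⟨0, hn⟩ : Fin n) (1:ℝ)) : ℝ)}) := by
  obtain ⟨R, hR⟩ := exists_isom (EuclideanSpace.single (⟨0, hn⟩ : Fin n) (1:ℝ)) e
    (by rw [EuclideanSpace.norm_single, he]; norm_num)
  have hpre : R ⁻¹' (ball (0:E) 1 ∩ {z : E | 3/4 * ‖z‖ ≤ (inner ℝ z e : ℝ)})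
      = ball (0:E) 1 ∩ {z : E | 3/4 * ‖z‖
          ≤ (inner ℝ z (EuclideanSpace.single (⟨0, hn⟩ : Fin n) (1:ℝ)) : ℝ)} := by
    ext z
    simp only [Set.mem_preimage, Set.mem_inter_iff, mem_ball_zero_iff, Set.mem_setOf_eq,
      R.norm_map]
    rw [← hR, R.inner_map_map]
  rw [← hpre, R.measurePreserving.measure_preimage]
  exact (measurableSet_ball.inter (cone_meas e)).nullMeasurableSet

lemma cone_scale (r : ℝ) (hr : 0 < r) (e : E) :
    volume (ball (0:E) r ∩ {z : E | 3/4 * ‖z‖ ≤ (inner ℝ z e : ℝ)})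
      = ENNReal.ofReal (r^n)
        * volume (ball (0:E) 1 ∩ {z : E | 3/4 * ‖z‖ ≤ (inner ℝ z e : ℝ)}) := by
  have hset : ball (0:E) r ∩ {z : E | 3/4 * ‖z‖ ≤ (inner ℝ z e : ℝ)}
      = r • (ball (0:E) 1 ∩ {z : E | 3/4 * ‖z‖ ≤ (inner ℝ z e : ℝ)}) := by
    ext z
    rw [Set.mem_smul_set_iff_inv_smul_mem₀ (ne_of_gt hr)]
    simp only [Set.mem_inter_iff, mem_ball_zero_iff, Set.mem_setOf_eq, norm_smul,
      real_inner_smul_left, Real.norm_eq_abs, abs_inv, abs_of_pos hr]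
    have hrinv : 0 < r⁻¹ := inv_pos.mpr hr
    constructor
    · rintro ⟨h1, h2⟩
      constructor
      · rw [← mul_lt_mul_iff_right₀ hr, mul_one, ← mul_assoc, mul_inv_cancel₀ (ne_of_gt hr), one_mul]
        exact h1
      · rw [mul_comm (3/4 : ℝ) (r⁻¹ * ‖z‖)]
        calc r⁻¹ * ‖z‖ * (3/4) = r⁻¹ * (3/4 * ‖z‖) := by ring
          _ ≤ r⁻¹ * (inner ℝ z e : ℝ) := by
              exact mul_le_mul_of_nonneg_left h2 hrinv.le
    · rintro ⟨h1, h2⟩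
      constructor
      · have := (mul_lt_mul_iff_right₀ hr).mpr h1
        rwa [mul_one, ← mul_assoc, mul_inv_cancel₀ (ne_of_gt hr), one_mul] at this
      · have := mul_le_mul_of_nonneg_left h2 hr.le
        calc (3/4 : ℝ) * ‖z‖ = r * (3/4 * (r⁻¹ * ‖z‖)) := by
              field_simp
          _ ≤ r * (r⁻¹ * (inner ℝ z e : ℝ)) := by
              apply mul_le_mul_of_nonneg_left _ hr.le
              exact h2
          _ = (inner ℝ z e : ℝ) := by field_simp
  rw [hset, Measure.addHaar_smul, finrank_euclideanSpace_fin,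
    abs_of_nonneg (pow_nonneg hr.le n)]

lemma kappa_pos (hn : 0 < n) :
    0 < volume (ball (0:E) 1 ∩ {z : E | 3/4 * ‖z‖
        ≤ (inner ℝ z (EuclideanSpace.single (⟨0, hn⟩ : Fin n) (1:ℝ)) : ℝ)}) := by
  set e₀ : EuclideanSpace ℝ (Fin n) := EuclideanSpace.single (⟨0, hn⟩ : Fin n) (1:ℝ) with he₀
  have he₀n : ‖e₀‖ = 1 := by rw [he₀, EuclideanSpace.norm_single]; norm_num
  have hU : IsOpen (ball (0:E) 1 ∩ {z : E | 3/4 * ‖z‖ < (inner ℝ z e₀ : ℝ)}) :=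
    isOpen_ball.inter (isOpen_lt (continuous_const.mul continuous_norm)
      (Continuous.inner continuous_id continuous_const))
  have hne : (ball (0:E) 1 ∩ {z : E | 3/4 * ‖z‖ < (inner ℝ z e₀ : ℝ)}).Nonempty := by
    refine ⟨(1/2 : ℝ) • e₀, ?_, ?_⟩
    · rw [mem_ball_zero_iff, norm_smul, he₀n, Real.norm_eq_abs]
      rw [abs_of_pos (by norm_num : (0:ℝ) < 1/2)]; norm_num
    · simp only [Set.mem_setOf_eq, norm_smul, real_inner_smul_left, Real.norm_eq_abs,
        real_inner_self_eq_norm_sq, he₀n]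
      rw [abs_of_pos (by norm_num : (0:ℝ) < 1/2)]; norm_num
  calc (0:ENNReal) < volume (ball (0:E) 1 ∩ {z : E | 3/4 * ‖z‖ < (inner ℝ z e₀ : ℝ)}) :=
      hU.measure_pos volume hne
    _ ≤ _ := measure_mono (Set.inter_subset_inter_right _
        (Set.setOf_subset_setOf.mpr (fun z => le_of_lt)))


lemma part2_gap (hn : 0 < n) (ε : ℝ) (hε : 0 < ε) (hε2 : ε ≤ 1/4) (e : E) (he : ‖e‖ = 1) :
    (volume (ball (0:E) 1 ∩ {z : E | 3/4 * ‖z‖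
        ≤ (inner ℝ z (EuclideanSpace.single (⟨0, hn⟩ : Fin n) (1:ℝ)) : ℝ)})).toReal * ε
      ≤ (volume ((ball (0:E) 1 \ closedBall (0:E) (1-ε))
          ∩ {z : E | 3/4 * ‖z‖ ≤ (inner ℝ z e : ℝ)})).toReal := by
  haveI : Nonempty (Fin n) := ⟨⟨0, hn⟩⟩
  set C := {z : E | 3/4 * ‖z‖ ≤ (inner ℝ z e : ℝ)} with hC
  set X := ball (0:E) 1 ∩ C with hX
  have hXm : MeasurableSet X := measurableSet_ball.inter (cone_meas e)
  have hκfin : volume X ≠ ⊤ :=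
    ((measure_mono Set.inter_subset_left).trans_lt measure_ball_lt_top).ne
  have hrot : volume X = volume (ball (0:E) 1 ∩ {z : E | 3/4 * ‖z‖
      ≤ (inner ℝ z (EuclideanSpace.single (⟨0, hn⟩ : Fin n) (1:ℝ)) : ℝ)}) := cone_rot hn e he
  set κr := (volume X).toReal with hκr
  have h0κ : 0 ≤ κr := ENNReal.toReal_nonneg
  have hset : (ball (0:E) 1 \ closedBall (0:E) (1-ε)) ∩ C
      = X \ (X ∩ closedBall (0:E) (1-ε)) := by
    rw [hX]; ext z
    simp only [Set.mem_inter_iff, Set.mem_diff, Set.mem_inter_iff]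
    tauto
  have hsub : X ∩ closedBall (0:E) (1-ε) ⊆ (ball (0:E) (1-ε) ∩ C) ∪ sphere (0:E) (1-ε) := by
    rintro z ⟨⟨hzb, hzC⟩, hzcb⟩
    rcases lt_or_eq_of_le (mem_closedBall_zero_iff.mp hzcb) with h | h
    · exact Or.inl ⟨mem_ball_zero_iff.mpr h, hzC⟩
    · exact Or.inr (by simpa [mem_sphere_zero_iff_norm] using h)
  have hb : volume (X ∩ closedBall (0:E) (1-ε)) ≤ ENNReal.ofReal ((1-ε)^n) * volume X := by
    calc volume (X ∩ closedBall (0:E) (1-ε))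
        ≤ volume ((ball (0:E) (1-ε) ∩ C) ∪ sphere (0:E) (1-ε)) := measure_mono hsub
      _ ≤ volume (ball (0:E) (1-ε) ∩ C) + volume (sphere (0:E) (1-ε)) := measure_union_le _ _
      _ = ENNReal.ofReal ((1-ε)^n) * volume X := by
          rw [Measure.addHaar_sphere, add_zero, cone_scale (1-ε) (by linarith) e, hX]
  have hdiff : volume (X \ (X ∩ closedBall (0:E) (1-ε)))
      = volume X - volume (X ∩ closedBall (0:E) (1-ε)) :=
    measure_diff Set.inter_subset_left (hXm.inter measurableSet_closedBall).nullMeasurableSet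
      ((measure_mono Set.inter_subset_left).trans_lt hκfin.lt_top).ne
  rw [← hrot, hset, hdiff,
    ENNReal.toReal_sub_of_le (measure_mono Set.inter_subset_left) hκfin]
  have hval : (volume (X ∩ closedBall (0:E) (1-ε))).toReal ≤ (1-ε)^n * κr := by
    have h9 := (ENNReal.toReal_le_toReal
      (((measure_mono Set.inter_subset_left).trans_lt hκfin.lt_top).ne)
      (ENNReal.mul_ne_top ENNReal.ofReal_ne_top hκfin)).mpr hb
    rwa [ENNReal.toReal_mul, ENNReal.toReal_ofReal (pow_nonneg (by linarith) n)] at h9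
  have hpow : ((1:ℝ)-ε)^n ≤ 1-ε := by
    calc ((1:ℝ)-ε)^n ≤ (1-ε)^1 := pow_le_pow_of_le_one (by linarith) (by linarith) hn
      _ = 1-ε := pow_one _
  nlinarith [hval, hpow, h0κ, mul_le_mul_of_nonneg_right hpow h0κ]


lemma part2_core (hn : 0 < n) (ε δ' : ℝ) (hε : 0 < ε) (hε2 : ε ≤ 1/4) (hδ0 : 0 < δ')
    (hdelta : δ' ≤ ε) (c : E) :
    min ((volume (ball (0:E) 1 ∩ {z : E | 3/4 * ‖z‖
          ≤ (inner ℝ z (EuclideanSpace.single (⟨0, hn⟩ : Fin n) (1:ℝ)) : ℝ)})).toReal * ε)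
        (volume (ball (0:E) (1/8:ℝ))).toReal
      ≤ (volume (symmDiff
          (closedBall (0:E) (1-ε) ∪ (closedBall (0:E) (1+δ') \ ball (0:E) 1))
          (ball c 1))).toReal := by
  set D := closedBall (0:E) (1-ε) with hD
  set A := closedBall (0:E) (1+δ') \ ball (0:E) 1 with hA
  set Ω := D ∪ A with hΩ
  set B := ball c 1 with hB
  have hΩfin : volume Ω ≠ ⊤ := by
    refine ((measure_union_le _ _).trans_lt ?_).ne
    exact ENNReal.add_lt_top.mpr ⟨measure_closedBall_lt_top,
      (measure_mono Set.diff_subset).trans_lt measure_closedBall_lt_top⟩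
  have hdiffsub : B \ Ω ⊆ symmDiff Ω B := by
    rw [Set.symmDiff_def]
    exact Set.subset_union_right
  have hfin : volume (symmDiff Ω B) ≠ ⊤ := by
    have hsub : symmDiff Ω B ⊆ Ω ∪ B := by
      rw [Set.symmDiff_def]
      exact Set.union_subset_union Set.diff_subset Set.diff_subset
    refine ((measure_mono hsub).trans_lt ?_).ne
    refine (measure_union_le _ _).trans_lt ?_
    exact ENNReal.add_lt_top.mpr ⟨hΩfin.lt_top, measure_ball_lt_top⟩
  have hkey : ∀ S : Set E, S ⊆ B \ Ω →
      (volume S).toReal ≤ (volume (symmDiff Ω B)).toReal := by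
    intro S hS
    have hSsub : S ⊆ symmDiff Ω B := hS.trans hdiffsub
    exact (ENNReal.toReal_le_toReal (((measure_mono hSsub).trans_lt hfin.lt_top).ne) hfin).mpr
      (measure_mono hSsub)
  have hnotΩ : ∀ z : EuclideanSpace ℝ (Fin n), 1 - ε < ‖z‖ → ‖z‖ < 1 → z ∉ Ω := by
    intro z h1 h2 hzΩ
    rcases hzΩ with hzD | hzA
    · rw [hD, mem_closedBall_zero_iff] at hzD; linarith
    · exact hzA.2 (mem_ball_zero_iff.mpr h2)
  rcases le_or_gt ‖c‖ 1 with hc | hc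
  · -- center close to origin: use the gap annulus intersected with a cone
    rcases eq_or_ne c 0 with rfl | hc0
    · refine (min_le_left _ _).trans ((part2_gap hn ε hε hε2
        (EuclideanSpace.single (⟨0, hn⟩ : Fin n) (1:ℝ))
        (by rw [EuclideanSpace.norm_single]; norm_num)).trans (hkey _ ?_))
      rintro z ⟨⟨hz1, hz2⟩, _⟩
      have hzn : ‖z‖ < 1 := mem_ball_zero_iff.mp hz1
      have hzn2 : 1 - ε < ‖z‖ := by
        by_contra hcon
        exact hz2 (mem_closedBall_zero_iff.mpr (by linarith))
      exact ⟨hz1, hnotΩ z hzn2 hzn⟩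
    · have hcpos : 0 < ‖c‖ := norm_pos_iff.mpr hc0
      have he : ‖(‖c‖⁻¹ • c : EuclideanSpace ℝ (Fin n))‖ = 1 := by
        rw [norm_smul, Real.norm_eq_abs, abs_inv, abs_of_pos hcpos,
          inv_mul_cancel₀ hcpos.ne']
      refine (min_le_left _ _).trans
        ((part2_gap hn ε hε hε2 (‖c‖⁻¹ • c) he).trans (hkey _ ?_))
      rintro z ⟨⟨hz1, hz2⟩, hz3⟩
      have hzn : ‖z‖ < 1 := mem_ball_zero_iff.mp hz1
      have hzn2 : 1 - ε < ‖z‖ := by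
        by_contra hcon
        exact hz2 (mem_closedBall_zero_iff.mpr (by linarith))
      have hip : 3/4 * ‖z‖ * ‖c‖ ≤ (inner ℝ z c : ℝ) := by
        have hz3' : 3/4 * ‖z‖ ≤ ‖c‖⁻¹ * (inner ℝ z c : ℝ) := by
          rwa [Set.mem_setOf_eq, real_inner_smul_right] at hz3
        have := mul_le_mul_of_nonneg_left hz3' hcpos.le
        calc 3/4 * ‖z‖ * ‖c‖ = ‖c‖ * (3/4 * ‖z‖) := by ring
          _ ≤ ‖c‖ * (‖c‖⁻¹ * (inner ℝ z c : ℝ)) := this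
          _ = (inner ℝ z c : ℝ) := by field_simp
      have hsq : ‖z - c‖^2 < 1 := by
        rw [norm_sub_sq_real]
        nlinarith [hzn, hzn2, hip, hcpos, hc, hε2, norm_nonneg z]
      have hzB : z ∈ B := by
        rw [hB, mem_ball_iff_norm]
        nlinarith [norm_nonneg (z - c), hsq]
      exact ⟨hzB, hnotΩ z hzn2 hzn⟩
  · -- center far from origin: a small ball outside the annulus
    refine (min_le_right _ _).trans ?_
    set p := c + (3/(4*‖c‖)) • c with hp
    have hcpos : 0 < ‖c‖ := by linarith
    have hpc : ‖p - c‖ = 3/4 := by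
      have : p - c = (3/(4*‖c‖)) • c := by rw [hp]; abel
      rw [this, norm_smul, Real.norm_eq_abs, abs_of_pos (by positivity)]
      field_simp
    have hpnorm : ‖p‖ = ‖c‖ + 3/4 := by
      have h1 : p = (1 + 3/(4*‖c‖)) • c := by
        rw [hp, add_smul, one_smul]
      rw [h1, norm_smul, Real.norm_eq_abs, abs_of_pos (by positivity)]
      field_simp
    have : volume (ball (0:E) (1/8:ℝ)) = volume (ball p (1/8:ℝ)) :=
      (Measure.addHaar_ball_center volume p (1/8)).symm
    rw [this]
    apply hkey
    intro w hw
    have hwp : ‖w - p‖ < 1/8 := by rwa [mem_ball_iff_norm] at hw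
    have hwB : w ∈ B := by
      rw [hB, mem_ball_iff_norm]
      calc ‖w - c‖ = ‖(w - p) + (p - c)‖ := by abel_nf
        _ ≤ ‖w - p‖ + ‖p - c‖ := norm_add_le _ _
        _ < 1/8 + 3/4 := by rw [hpc]; linarith
        _ < 1 := by norm_num
    have hwn : 1 + 1/2 < ‖w‖ := by
      have h2 : ‖p‖ - ‖w‖ ≤ ‖p - w‖ := norm_sub_norm_le p w
      have h3 : ‖p - w‖ = ‖w - p‖ := norm_sub_rev p w
      rw [hpnorm] at h2
      rw [h3] at h2
      linarith
    refine ⟨hwB, ?_⟩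
    intro hwΩ
    rcases hwΩ with hwD | hwA
    · rw [hD, mem_closedBall_zero_iff] at hwD; linarith
    · have := hwA.1
      rw [mem_closedBall_zero_iff] at this
      linarith

end aux

noncomputable def hsSq {n : ℕ} (Ω : Set (EuclideanSpace ℝ (Fin n))) : ℝ :=
  ∫ z in Ω, ∫ w in Ω, Real.exp (-Real.pi * dist z w ^ 2)

/-- The Fraenkel asymmetry index of a set `Ω` of finite positive measure. -/
noncomputable def fraenkelAsymmetry {n : ℕ} (Ω : Set (EuclideanSpace ℝ (Fin n))) : ℝ :=
  sInf {t : ℝ | ∃ (c : EuclideanSpace ℝ (Fin n)) (ρ : ℝ),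
    volume (Metric.ball c ρ) = volume Ω ∧
    t = (volume (symmDiff Ω (Metric.ball c ρ))).toReal / (volume Ω).toReal}

/-- The perturbed set `Ω_ε` (ball of radius `1-ε` together with an annulus). -/
def perturbedSet (d : ℕ) (δ : ℝ → ℝ) (ε : ℝ) : Set (EuclideanSpace ℝ (Fin (2 * d))) :=
  {z | ‖z‖ ≤ 1 - ε ∨ (1 ≤ ‖z‖ ∧ ‖z‖ ≤ 1 + δ ε)}

lemma perturbed_eq (d : ℕ) (δ : ℝ → ℝ) (ε : ℝ) :
    perturbedSet d δ ε = closedBall (0 : EuclideanSpace ℝ (Fin (2 * d))) (1-ε)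
      ∪ (closedBall (0 : EuclideanSpace ℝ (Fin (2 * d))) (1 + δ ε)
          \ ball (0 : EuclideanSpace ℝ (Fin (2 * d))) 1) := by
  ext z
  simp only [perturbedSet, Set.mem_setOf_eq, Set.mem_union, mem_closedBall_zero_iff,
    Set.mem_diff, mem_ball_zero_iff, not_lt]
  tauto

theorem sharpness_of_exponent_two (d : ℕ) (hd : 0 < d) (δ : ℝ → ℝ)
    (hδ : ∀ ε : ℝ, 0 < ε → ε < 1 → 0 < δ ε ∧
      volume (perturbedSet d δ ε)
        = volume (Metric.ball (0 : EuclideanSpace ℝ (Fin (2 * d))) 1)) :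
    (∃ C > (0 : ℝ), ∃ ε₀ > (0 : ℝ), ∀ ε : ℝ, 0 < ε → ε < ε₀ →
        hsSq (Metric.ball (0 : EuclideanSpace ℝ (Fin (2 * d))) 1)
            - hsSq (perturbedSet d δ ε) ≤ C * ε ^ 2) ∧
      (∃ c_d > (0 : ℝ), ∃ ε₀ > (0 : ℝ), ∀ ε : ℝ, 0 < ε → ε < ε₀ →
        c_d * ε ≤ fraenkelAsymmetry (perturbedSet d δ ε)) ∧
      ∀ κ : ℝ, 0 ≤ κ → κ < 2 → ∀ c > (0 : ℝ),
        ¬ ∀ Ω : Set (EuclideanSpace ℝ (Fin (2 * d))), MeasurableSet Ω →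
            volume Ω = volume (Metric.ball (0 : EuclideanSpace ℝ (Fin (2 * d))) 1) →
            hsSq Ω ≤ hsSq (Metric.ball (0 : EuclideanSpace ℝ (Fin (2 * d))) 1)
              - c * fraenkelAsymmetry Ω ^ κ := by
  have hn2d : 0 < 2 * d := by omega
  set V := (volume (ball (0 : EuclideanSpace ℝ (Fin (2 * d))) 1)).toReal with hV
  have hVEtop : volume (ball (0 : EuclideanSpace ℝ (Fin (2 * d))) 1) ≠ ⊤ :=
    measure_ball_lt_top.ne
  haveI : Nonempty (Fin (2 * d)) := ⟨⟨0, hn2d⟩⟩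
  have hVpos : 0 < V :=
    ENNReal.toReal_pos (measure_ball_pos _ _ one_pos).ne' hVEtop
  -- Part A
  have hA : ∀ ε : ℝ, 0 < ε → ε < 1/2 →
      hsSq (Metric.ball (0 : EuclideanSpace ℝ (Fin (2 * d))) 1)
          - hsSq (perturbedSet d δ ε)
        ≤ (8 * (2*d) * V^2 + (2*d)^2 * V^2 + 1) * ε ^ 2 := by
    intro ε hε hε2
    obtain ⟨hδpos, hδvol⟩ := hδ ε hε (by linarith)
    rw [perturbed_eq d δ ε] at hδvol ⊢
    have hmain := part1_core hn2d ε (δ ε) hε hε2 hδpos hδvol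
    unfold hsSq
    refine hmain.trans ?_
    have h1 : (0:ℝ) ≤ ε^2 := sq_nonneg ε
    push_cast
    nlinarith
  -- Part B
  set κr := (volume (ball (0 : EuclideanSpace ℝ (Fin (2 * d))) 1
      ∩ {z : EuclideanSpace ℝ (Fin (2 * d)) | 3/4 * ‖z‖
          ≤ (inner ℝ z (EuclideanSpace.single (⟨0, hn2d⟩ : Fin (2 * d)) (1:ℝ)) : ℝ)})).toReal
    with hκr
  set v₀ := (volume (ball (0 : EuclideanSpace ℝ (Fin (2 * d))) (1/8:ℝ))).toReal with hv₀
  have hκpos : 0 < κr :=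
    ENNReal.toReal_pos (kappa_pos hn2d).ne'
      ((measure_mono Set.inter_subset_left).trans_lt measure_ball_lt_top).ne
  have hv₀pos : 0 < v₀ :=
    ENNReal.toReal_pos (measure_ball_pos _ _ (by norm_num)).ne' measure_ball_lt_top.ne
  have hB : ∀ ε : ℝ, 0 < ε → ε < min (1/4) (v₀/κr) →
      (κr / V) * ε ≤ fraenkelAsymmetry (perturbedSet d δ ε) := by
    intro ε hε hεlt
    have hε4 : ε ≤ 1/4 := (hεlt.trans_le (min_le_left _ _)).le
    have hεv : κr * ε ≤ v₀ := by
      have h7 : ε < v₀/κr := hεlt.trans_le (min_le_right _ _)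
      have := (mul_lt_mul_iff_right₀ hκpos).mpr h7
      rw [mul_div_cancel₀ _ hκpos.ne'] at this
      exact this.le
    obtain ⟨hδpos, hδvol⟩ := hδ ε hε (by linarith)
    rw [perturbed_eq d δ ε] at hδvol
    have hδle : δ ε ≤ ε :=
      (vol_facts hn2d ε (δ ε) hε (by linarith) hδpos hδvol).2.2
    unfold fraenkelAsymmetry
    apply le_csInf
    · exact ⟨_, 0, 1, hδvol.symm.trans (by rw [perturbed_eq]), rfl⟩
    · rintro t ⟨cc, ρ, hρ, rfl⟩
      have hΩvol : volume (perturbedSet d δ ε)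
          = volume (ball (0 : EuclideanSpace ℝ (Fin (2 * d))) 1) := by
        rw [perturbed_eq]; exact hδvol
      have hρ1 : ρ = 1 := by
        have hρpos : 0 < ρ := by
          by_contra hcon
          push_neg at hcon
          rw [ball_eq_empty.mpr hcon] at hρ
          simp only [measure_empty] at hρ
          rw [hΩvol] at hρ
          exact (measure_ball_pos volume (0 : EuclideanSpace ℝ (Fin (2 * d))) one_pos).ne' hρ.symm
        have hball := Measure.addHaar_ball volume cc hρpos.le
        rw [finrank_euclideanSpace_fin] at hball
        rw [hball, hΩvol] at hρ
        have htr := congrArg ENNReal.toReal hρ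
        rw [ENNReal.toReal_mul, ENNReal.toReal_ofReal (pow_nonneg hρpos.le _)] at htr
        have hpoweq : ρ ^ (2*d) = 1 := by
          have := mul_right_cancel₀ hVpos.ne' (htr.trans (one_mul V).symm)
          exact this
        rcases lt_trichotomy ρ 1 with h | h | h
        · exfalso
          have : ρ ^ (2*d) < 1 := pow_lt_one₀ hρpos.le h (by omega)
          linarith [hpoweq]
        · exact h
        · exfalso
          have : 1 < ρ ^ (2*d) := one_lt_pow₀ h (by omega)
          linarith [hpoweq]
      subst hρ1
      rw [hΩvol]
      have hmin := part2_core hn2d ε (δ ε) hε hε4 hδpos hδle cc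
      rw [← perturbed_eq d δ ε] at hmin
      rw [min_eq_left hεv] at hmin
      rw [div_mul_eq_mul_div, div_le_div_iff₀ hVpos hVpos]
      calc κr * ε * V ≤ (volume (symmDiff (perturbedSet d δ ε) (ball cc 1))).toReal * V :=
          mul_le_mul_of_nonneg_right hmin hVpos.le
        _ = _ := by ring
  refine ⟨⟨8 * (2*d) * V^2 + (2*d)^2 * V^2 + 1, by positivity, 1/2, by norm_num, hA⟩,
    ⟨κr / V, by positivity, min (1/4) (v₀/κr), by positivity, hB⟩, ?_⟩
  -- Part C
  intro κ hκ0 hκ2 c hc hall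
  set cd := κr / V with hcd
  have hcdpos : (0:ℝ) < cd := by positivity
  set C := 8 * (2*(d:ℝ)) * V^2 + (2*(d:ℝ))^2 * V^2 + 1 with hC
  have hCpos : 0 < C := by positivity
  set β := c * cd ^ κ / C with hβ
  have hβpos : 0 < β := by
    apply div_pos (mul_pos hc (Real.rpow_pos_of_pos hcdpos κ)) hCpos
  set ε := min (min ((1/2)/2) ((min (1/4) (v₀/κr))/2)) (min (1/2) (β ^ (1/(2-κ)) / 2)) with hε
  have hβr : 0 < β ^ (1/(2-κ)) := Real.rpow_pos_of_pos hβpos _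
  have hεpos : 0 < ε := by
    apply lt_min (lt_min (by norm_num) (by positivity)) (lt_min (by norm_num) (by positivity))
  have hεa : ε < 1/2 := by
    calc ε ≤ (1/2)/2 := (min_le_left _ _).trans (min_le_left _ _)
      _ < 1/2 := by norm_num
  have hεb : ε < min (1/4) (v₀/κr) := by
    have hmpos : (0:ℝ) < min (1/4) (v₀/κr) := by positivity
    calc ε ≤ (min (1/4) (v₀/κr))/2 := (min_le_left _ _).trans (min_le_right _ _)
      _ < min (1/4) (v₀/κr) := by linarith
  have hεc : ε < β ^ (1/(2-κ)) := by
    calc ε ≤ β ^ (1/(2-κ)) / 2 := (min_le_right _ _).trans (min_le_right _ _)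
      _ < β ^ (1/(2-κ)) := by linarith
  have hεle1 : ε ≤ 1 := by
    calc ε ≤ 1/2 := (min_le_right _ _).trans (min_le_left _ _)
      _ ≤ 1 := by norm_num
  -- the measurable set
  have hΩmeas : MeasurableSet (perturbedSet d δ ε) := by
    rw [perturbed_eq]
    exact measurableSet_closedBall.union (measurableSet_closedBall.diff measurableSet_ball)
  obtain ⟨hδpos, hδvol⟩ := hδ ε hεpos (by linarith)
  have hineq := hall (perturbedSet d δ ε) hΩmeas hδvol
  have h1 := hA ε hεpos hεa
  have h2 := hB ε hεpos hεb
  -- rpow manipulations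
  have hasym_nonneg : 0 ≤ cd * ε := by positivity
  have h3 : (cd * ε) ^ κ ≤ fraenkelAsymmetry (perturbedSet d δ ε) ^ κ :=
    Real.rpow_le_rpow hasym_nonneg h2 hκ0
  have h4 : c * (cd * ε) ^ κ ≤ C * ε ^ 2 := by
    have := mul_le_mul_of_nonneg_left h3 hc.le
    unfold hsSq at h1 hineq
    nlinarith [h1, hineq, this]
  have h5 : (cd * ε) ^ κ = cd ^ κ * ε ^ κ := Real.mul_rpow hcdpos.le hεpos.le
  have h6 : (ε:ℝ) ^ (2:ℕ) = ε ^ κ * ε ^ (2 - κ) := by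
    rw [← Real.rpow_natCast ε 2, ← Real.rpow_add hεpos]
    norm_num
  have h7 : ε ^ (2-κ) < β := by
    have h8 := Real.rpow_lt_rpow hεpos.le hεc (by linarith : (0:ℝ) < 2 - κ)
    rwa [← Real.rpow_mul hβpos.le, one_div, inv_mul_cancel₀ (by linarith : (2:ℝ) - κ ≠ 0),
      Real.rpow_one] at h8
  have hεκpos : 0 < ε ^ κ := Real.rpow_pos_of_pos hεpos κ
  -- contradiction
  have h9 : c * cd ^ κ * ε ^ κ ≤ C * (ε ^ κ * ε ^ (2-κ)) := by
    calc c * cd ^ κ * ε ^ κ = c * (cd ^ κ * ε ^ κ) := by ring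
      _ = c * (cd * ε) ^ κ := by rw [h5]
      _ ≤ C * ε ^ 2 := h4
      _ = C * (ε ^ κ * ε ^ (2-κ)) := by rw [← h6]
  have h10 : c * cd ^ κ ≤ C * ε ^ (2-κ) := by
    have h11 : (c * cd ^ κ) * ε ^ κ ≤ (C * ε ^ (2-κ)) * ε ^ κ := by
      calc (c * cd ^ κ) * ε ^ κ ≤ C * (ε ^ κ * ε ^ (2-κ)) := h9
        _ = (C * ε ^ (2-κ)) * ε ^ κ := by ring
    exact le_of_mul_le_mul_right h11 hεκpos
  have h12 : C * ε ^ (2-κ) < C * β := (mul_lt_mul_iff_right₀ hCpos).mpr h7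
  have h13 : C * β = c * cd ^ κ := by
    rw [hβ, mul_div_cancel₀ _ hCpos.ne']
  linarith
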